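/- For χ in the positive orthant Γ_n and 1 ≤ k ≤ n, the Hessian of g(χ) = log σ_k(χ) is negative semidefinite, i.e., log σ_k is concave on Γ_n. -/

import Mathlib

open Finset

/-- The `k`-th elementary symmetric polynomial in `n` real variables. -/
noncomputable def esymm (n k : ℕ) (x : Fin n → ℝ) : ℝ :=
  ∑ s ∈ Finset.univ.powersetCard k, ∏ i ∈ s, x i

/-- The `k`-th elementary symmetric polynomial of the variables with the
`i`-th one removed. -/
noncomputable def esymmOmit (n k : ℕ) (x : Fin n → ℝ) (i : Fin n) : ℝ :=
  ∑ s ∈ (Finset.univ.erase i).powersetCard k, ∏ j ∈ s, x j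

/-- The `i`-th partial derivative of a function of `n` real variables. -/
noncomputable def pd (n : ℕ) (g : (Fin n → ℝ) → ℝ) (i : Fin n) (χ : Fin n → ℝ) : ℝ :=
  fderiv ℝ g χ (Pi.single i 1)

/-- The positive orthant `Γ_n`. -/
def Gamma (n : ℕ) : Set (Fin n → ℝ) := {χ | ∀ i, 0 < χ i}

namespace StmtAux

variable {n : ℕ}

/-- Elementary symmetric polynomial of the variables indexed by `s`. -/
noncomputable def Wf (s : Finset (Fin n)) (k : ℕ) (x : Fin n → ℝ) : ℝ :=
  ∑ t ∈ s.powersetCard k, ∏ i ∈ t, x i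

lemma Wf_zero (s : Finset (Fin n)) (x : Fin n → ℝ) : Wf s 0 x = 1 := by
  simp [Wf]

lemma Wf_one (s : Finset (Fin n)) (x : Fin n → ℝ) : Wf s 1 x = ∑ i ∈ s, x i := by
  rw [Wf, powersetCard_one, Finset.sum_map]
  simp

lemma Wf_pos {s : Finset (Fin n)} {k : ℕ} {x : Fin n → ℝ} (hk : k ≤ s.card)
    (hx : ∀ i ∈ s, 0 < x i) : 0 < Wf s k x := by
  apply Finset.sum_pos
  · intro t ht
    rw [mem_powersetCard] at ht
    exact Finset.prod_pos fun i hi => hx i (ht.1 hi)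
  · exact powersetCard_nonempty.2 hk

lemma powersetCard_erase (s : Finset (Fin n)) (i : Fin n) (k : ℕ) :
    (s.erase i).powersetCard k = (s.powersetCard k).filter (fun t => i ∉ t) := by
  ext t
  simp only [mem_powersetCard, mem_filter, subset_erase]
  tauto

/-- Splitting off the variable `i`. -/
lemma Wf_erase {s : Finset (Fin n)} {i : Fin n} (hi : i ∈ s) (k : ℕ) (x : Fin n → ℝ) :
    Wf s (k+1) x = Wf (s.erase i) (k+1) x + x i * Wf (s.erase i) k x := by
  classical
  rw [Wf, ← Finset.sum_filter_add_sum_filter_not (s.powersetCard (k+1)) (fun t => i ∉ t)]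
  congr 1
  · rw [Wf, powersetCard_erase]
  · rw [Wf, Finset.mul_sum]
    refine Finset.sum_bij' (fun t _ => t.erase i) (fun t _ => insert i t) ?hi ?hj ?left ?right ?h
    case hi =>
      intro t ht
      simp only [mem_filter, mem_powersetCard, not_not] at ht
      simp only [powersetCard_erase, mem_filter, mem_powersetCard]
      refine ⟨⟨(Finset.erase_subset i t).trans ht.1.1, ?_⟩, Finset.notMem_erase i t⟩
      rw [Finset.card_erase_of_mem ht.2, ht.1.2]
      rfl
    case hj =>
      intro t ht
      simp only [powersetCard_erase, mem_filter, mem_powersetCard] at ht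
      simp only [mem_filter, mem_powersetCard, not_not]
      refine ⟨⟨Finset.insert_subset hi ht.1.1, ?_⟩, Finset.mem_insert_self i t⟩
      rw [Finset.card_insert_of_notMem ht.2, ht.1.2]
    case left =>
      intro t ht
      simp only [mem_filter, not_not] at ht
      exact Finset.insert_erase ht.2
    case right =>
      intro t ht
      simp only [powersetCard_erase, mem_filter, mem_powersetCard] at ht
      exact Finset.erase_insert ht.2
    case h =>
      intro t ht
      simp only [mem_filter, not_not] at ht
      exact (Finset.mul_prod_erase t x ht.2).symm

lemma Wf_sum_erase (s : Finset (Fin n)) (k : ℕ) (x : Fin n → ℝ) :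
    ∑ i ∈ s, Wf (s.erase i) k x = ((s.card : ℝ) - k) * Wf s k x := by
  classical
  have h1 : ∀ i ∈ s, Wf (s.erase i) k x
      = ∑ t ∈ s.powersetCard k, if i ∉ t then ∏ j ∈ t, x j else 0 := by
    intro i _
    rw [Wf, powersetCard_erase, Finset.sum_filter]
  rw [Finset.sum_congr rfl h1, Finset.sum_comm, Wf, Finset.mul_sum]
  apply Finset.sum_congr rfl
  intro t ht
  rw [mem_powersetCard] at ht
  rw [Finset.sum_ite, Finset.sum_const, Finset.sum_const_zero, add_zero,
    ← Finset.sdiff_eq_filter, Finset.card_sdiff_of_subset ht.1, nsmul_eq_mul, ht.2,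
    Nat.cast_sub (ht.2 ▸ Finset.card_le_card ht.1)]


lemma Wf_deriv_sum (s : Finset (Fin n)) (k : ℕ) (x : Fin n → ℝ) :
    ∑ i ∈ s, x i * Wf (s.erase i) k x = ((k : ℝ) + 1) * Wf s (k+1) x := by
  have h1 : ∀ i ∈ s, x i * Wf (s.erase i) k x
      = Wf s (k+1) x - Wf (s.erase i) (k+1) x := by
    intro i hi
    rw [Wf_erase hi k x]
    ring
  rw [Finset.sum_congr rfl h1, Finset.sum_sub_distrib, Finset.sum_const,
    Wf_sum_erase s (k+1) x, nsmul_eq_mul]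
  push_cast
  ring

lemma Wf_smul (s : Finset (Fin n)) (k : ℕ) (a : ℝ) (x : Fin n → ℝ) :
    Wf s k (a • x) = a ^ k * Wf s k x := by
  rw [Wf, Wf, Finset.mul_sum]
  refine Finset.sum_congr rfl fun t ht => ?_
  rw [mem_powersetCard] at ht
  simp only [Pi.smul_apply, smul_eq_mul]
  rw [Finset.prod_mul_distrib, Finset.prod_const, ht.2]

lemma hdiv {z A B : ℝ} (hz : 0 < z) (hA : 0 < A) (hB : 0 < B) :
    z * A / (A + z * B) = z * (A / B) / (A / B + z) := by
  rw [div_eq_div_iff (by positivity) (by positivity)]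
  field_simp

lemma hmono {z F G : ℝ} (hz : 0 < z) (hF : 0 < F) (hFG : F ≤ G) :
    z * F / (F + z) ≤ z * G / (G + z) := by
  have hG : 0 < G := lt_of_lt_of_le hF hFG
  rw [div_le_div_iff₀ (by positivity) (by positivity)]
  nlinarith [mul_pos hz hz]

lemma hsuper {za zb u v : ℝ} (hza : 0 < za) (hzb : 0 < zb) (hu : 0 < u) (hv : 0 < v) :
    za * u / (u + za) + zb * v / (v + zb) ≤ (za + zb) * (u + v) / ((u + v) + (za + zb)) := by
  rw [div_add_div _ _ (by positivity) (by positivity),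
    div_le_div_iff₀ (by positivity) (by positivity)]
  nlinarith [sq_nonneg (za * v - zb * u), mul_pos hza hzb, mul_pos hu hv,
    mul_pos (mul_pos hza hzb) (mul_pos hu hv)]

/-- Marcus–Lopes superadditivity of `E_{k+1}/E_k`. -/
lemma sup_ratio (k : ℕ) : ∀ (s : Finset (Fin n)) (x y : Fin n → ℝ),
    k + 1 ≤ s.card → (∀ i ∈ s, 0 < x i) → (∀ i ∈ s, 0 < y i) →
    Wf s (k+1) x / Wf s k x + Wf s (k+1) y / Wf s k y
      ≤ Wf s (k+1) (x + y) / Wf s k (x + y) := by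
  induction k with
  | zero =>
    intro s x y hcard hx hy
    rw [Wf_zero, Wf_zero, Wf_zero, Wf_one, Wf_one, Wf_one]
    simp only [div_one, Pi.add_apply]
    rw [Finset.sum_add_distrib]
  | succ k ih =>
    intro s x y hcard hx hy
    have hxy : ∀ i ∈ s, 0 < (x + y) i := fun i hi => by
      have := hx i hi; have := hy i hi
      simp only [Pi.add_apply]; linarith
    have hk1 : k + 1 ≤ s.card := le_trans (Nat.le_succ _) hcard
    -- expansion of (k+2) * ratio as a sum
    have expand : ∀ (z : Fin n → ℝ),
        ((k : ℝ) + 2) * (Wf s (k+2) z / Wf s (k+1) z)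
          = ∑ i ∈ s, z i * Wf (s.erase i) (k+1) z / Wf s (k+1) z := by
      intro z
      rw [← Finset.sum_div, Wf_deriv_sum s (k+1) z]
      push_cast
      ring
    have hkey : ∀ i ∈ s,
        x i * Wf (s.erase i) (k+1) x / Wf s (k+1) x
          + y i * Wf (s.erase i) (k+1) y / Wf s (k+1) y
        ≤ (x + y) i * Wf (s.erase i) (k+1) (x + y) / Wf s (k+1) (x + y) := by
      intro i hi
      have hcard' : k + 1 ≤ (s.erase i).card := by
        rw [Finset.card_erase_of_mem hi]
        omega
      have hcard'' : k ≤ (s.erase i).card := le_trans (Nat.le_succ _) hcard'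
      have hx' : ∀ j ∈ s.erase i, 0 < x j := fun j hj => hx j (Finset.mem_of_mem_erase hj)
      have hy' : ∀ j ∈ s.erase i, 0 < y j := fun j hj => hy j (Finset.mem_of_mem_erase hj)
      have hxy' : ∀ j ∈ s.erase i, 0 < (x + y) j :=
        fun j hj => hxy j (Finset.mem_of_mem_erase hj)
      have hA : 0 < Wf (s.erase i) (k+1) x := Wf_pos hcard' hx'
      have hB : 0 < Wf (s.erase i) k x := Wf_pos hcard'' hx'
      have hA' : 0 < Wf (s.erase i) (k+1) y := Wf_pos hcard' hy'
      have hB' : 0 < Wf (s.erase i) k y := Wf_pos hcard'' hy'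
      have hC : 0 < Wf (s.erase i) (k+1) (x + y) := Wf_pos hcard' hxy'
      have hD : 0 < Wf (s.erase i) k (x + y) := Wf_pos hcard'' hxy'
      have hxi : 0 < x i := hx i hi
      have hyi : 0 < y i := hy i hi
      have hxyi : 0 < (x + y) i := hxy i hi
      have hIH := ih (s.erase i) x y hcard' hx' hy'
      rw [Wf_erase hi k x, Wf_erase hi k y, Wf_erase hi k (x + y),
        hdiv hxi hA hB, hdiv hyi hA' hB', hdiv hxyi hC hD]
      calc x i * (Wf (s.erase i) (k+1) x / Wf (s.erase i) k x)
            / (Wf (s.erase i) (k+1) x / Wf (s.erase i) k x + x i)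
          + y i * (Wf (s.erase i) (k+1) y / Wf (s.erase i) k y)
            / (Wf (s.erase i) (k+1) y / Wf (s.erase i) k y + y i)
          ≤ (x i + y i) * (Wf (s.erase i) (k+1) x / Wf (s.erase i) k x
              + Wf (s.erase i) (k+1) y / Wf (s.erase i) k y)
            / ((Wf (s.erase i) (k+1) x / Wf (s.erase i) k x
              + Wf (s.erase i) (k+1) y / Wf (s.erase i) k y) + (x i + y i)) :=
            hsuper hxi hyi (by positivity) (by positivity)
        _ ≤ (x i + y i) * (Wf (s.erase i) (k+1) (x + y) / Wf (s.erase i) k (x + y))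
            / (Wf (s.erase i) (k+1) (x + y) / Wf (s.erase i) k (x + y) + (x i + y i)) :=
            hmono (by positivity) (by positivity) hIH
        _ = (x + y) i * (Wf (s.erase i) (k+1) (x + y) / Wf (s.erase i) k (x + y))
            / (Wf (s.erase i) (k+1) (x + y) / Wf (s.erase i) k (x + y) + (x + y) i) := by
            simp only [Pi.add_apply]
    have hsum : ((k : ℝ) + 2) * (Wf s (k+2) x / Wf s (k+1) x)
          + ((k : ℝ) + 2) * (Wf s (k+2) y / Wf s (k+1) y)
        ≤ ((k : ℝ) + 2) * (Wf s (k+2) (x + y) / Wf s (k+1) (x + y)) := by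
      rw [expand x, expand y, expand (x + y), ← Finset.sum_add_distrib]
      exact Finset.sum_le_sum hkey
    have hc : (0 : ℝ) < (k : ℝ) + 2 := by positivity
    exact (mul_le_mul_iff_of_pos_left hc).mp (by linarith : ((k : ℝ) + 2)
      * (Wf s (k+2) x / Wf s (k+1) x + Wf s (k+2) y / Wf s (k+1) y)
      ≤ ((k : ℝ) + 2) * (Wf s (k+2) (x + y) / Wf s (k+1) (x + y)))

/-- Telescoping product. -/
lemma Wf_telescope {k : ℕ} (hk : k ≤ n) (x : Fin n → ℝ) (hx : ∀ i, 0 < x i) :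
    Wf (univ : Finset (Fin n)) k x
      = ∏ j ∈ range k, (Wf univ (j+1) x / Wf univ j x) := by
  have hcard : (univ : Finset (Fin n)).card = n := by
    simp [Finset.card_univ]
  induction k with
  | zero => simp [Wf_zero]
  | succ k ih =>
    have hk' : k ≤ n := le_trans (Nat.le_succ _) hk
    have hpos : 0 < Wf (univ : Finset (Fin n)) k x :=
      Wf_pos (by rw [hcard]; exact hk') (fun i _ => hx i)
    rw [Finset.prod_range_succ, ← ih hk']
    field_simp

end StmtAux

open StmtAux in
theorem stmt5 (n k : ℕ) (hk1 : 1 ≤ k) (hkn : k ≤ n) :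
    ConcaveOn ℝ (Gamma n) (fun χ => Real.log (esymm n k χ)) := by
  have hcard : (univ : Finset (Fin n)).card = n := by simp [Finset.card_univ]
  have hesymm : ∀ x : Fin n → ℝ, esymm n k x = Wf univ k x := fun x => rfl
  have hEpos : ∀ (x : Fin n → ℝ), (∀ i, 0 < x i) → 0 < Wf (univ : Finset (Fin n)) k x :=
    fun x hx => Wf_pos (by rw [hcard]; exact hkn) (fun i _ => hx i)
  constructor
  · intro x hx y hy a b ha hb hab
    intro i
    simp only [Pi.add_apply, Pi.smul_apply, smul_eq_mul]
    rcases eq_or_lt_of_le ha with h | h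
    · have hb1 : b = 1 := by linarith
      rw [← h, hb1]; simpa using hy i
    · have h2 : 0 ≤ b * y i := mul_nonneg hb (le_of_lt (hy i))
      have h3 := mul_pos h (hx i)
      linarith
  · intro x hx y hy a b ha hb hab
    rcases eq_or_lt_of_le ha with h | ha'
    · have hb1 : b = 1 := by linarith
      simp [← h, hb1]
    rcases eq_or_lt_of_le hb with h | hb'
    · have ha1 : a = 1 := by linarith
      simp [← h, ha1]
    -- main case
    have haxpos : ∀ i ∈ (univ : Finset (Fin n)), 0 < (a • x) i := by
      intro i _; simp only [Pi.smul_apply, smul_eq_mul]; exact mul_pos ha' (hx i)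
    have hbypos : ∀ i ∈ (univ : Finset (Fin n)), 0 < (b • y) i := by
      intro i _; simp only [Pi.smul_apply, smul_eq_mul]; exact mul_pos hb' (hy i)
    have habpos : ∀ i, 0 < (a • x + b • y) i := by
      intro i
      have h1 := haxpos i (Finset.mem_univ i); have h2 := hbypos i (Finset.mem_univ i)
      simp only [Pi.add_apply]
      linarith
    -- per-factor inequality
    have hfactor : ∀ j ∈ range k,
        (Wf univ (j+1) x / Wf univ j x) ^ a * (Wf univ (j+1) y / Wf univ j y) ^ b
          ≤ Wf univ (j+1) (a • x + b • y) / Wf univ j (a • x + b • y) := by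
      intro j hj
      rw [Finset.mem_range] at hj
      have hj1 : j + 1 ≤ (univ : Finset (Fin n)).card := by rw [hcard]; omega
      have hjn : j ≤ (univ : Finset (Fin n)).card := le_trans (Nat.le_succ _) hj1
      have h1 := sup_ratio j univ (a • x) (b • y) hj1 haxpos hbypos
      have hax : Wf (univ : Finset (Fin n)) (j+1) (a • x) / Wf univ j (a • x)
          = a * (Wf univ (j+1) x / Wf univ j x) := by
        rw [Wf_smul, Wf_smul]
        have hW : 0 < Wf (univ : Finset (Fin n)) j x :=
          Wf_pos hjn (fun i _ => hx i)
        field_simp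
        ring
      have hby : Wf (univ : Finset (Fin n)) (j+1) (b • y) / Wf univ j (b • y)
          = b * (Wf univ (j+1) y / Wf univ j y) := by
        rw [Wf_smul, Wf_smul]
        have hW : 0 < Wf (univ : Finset (Fin n)) j y :=
          Wf_pos hjn (fun i _ => hy i)
        field_simp
        ring
      rw [hax, hby] at h1
      have hgm : (Wf univ (j+1) x / Wf univ j x) ^ a * (Wf univ (j+1) y / Wf univ j y) ^ b
          ≤ a * (Wf univ (j+1) x / Wf univ j x) + b * (Wf univ (j+1) y / Wf univ j y) := by
        apply Real.geom_mean_le_arith_mean2_weighted (le_of_lt ha') (le_of_lt hb') _ _ hab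
        · have h1' : 0 < Wf (univ : Finset (Fin n)) (j+1) x := Wf_pos hj1 (fun i _ => hx i)
          have h2' : 0 < Wf (univ : Finset (Fin n)) j x := Wf_pos hjn (fun i _ => hx i)
          positivity
        · have h1' : 0 < Wf (univ : Finset (Fin n)) (j+1) y := Wf_pos hj1 (fun i _ => hy i)
          have h2' : 0 < Wf (univ : Finset (Fin n)) j y := Wf_pos hjn (fun i _ => hy i)
          positivity
      exact le_trans hgm h1
    -- multiply the factors
    have hposx : ∀ j ∈ range k, (0:ℝ) ≤ Wf (univ : Finset (Fin n)) (j+1) x / Wf univ j x := by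
      intro j hj
      rw [Finset.mem_range] at hj
      have h1 : 0 < Wf (univ : Finset (Fin n)) (j+1) x :=
        Wf_pos (by rw [hcard]; omega) (fun i _ => hx i)
      have h2 : 0 < Wf (univ : Finset (Fin n)) j x :=
        Wf_pos (by rw [hcard]; omega) (fun i _ => hx i)
      positivity
    have hposy : ∀ j ∈ range k, (0:ℝ) ≤ Wf (univ : Finset (Fin n)) (j+1) y / Wf univ j y := by
      intro j hj
      rw [Finset.mem_range] at hj
      have h1 : 0 < Wf (univ : Finset (Fin n)) (j+1) y :=
        Wf_pos (by rw [hcard]; omega) (fun i _ => hy i)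
      have h2 : 0 < Wf (univ : Finset (Fin n)) j y :=
        Wf_pos (by rw [hcard]; omega) (fun i _ => hy i)
      positivity
    have hprod : Wf (univ : Finset (Fin n)) k x ^ a * Wf (univ : Finset (Fin n)) k y ^ b
        ≤ Wf (univ : Finset (Fin n)) k (a • x + b • y) := by
      calc Wf (univ : Finset (Fin n)) k x ^ a * Wf (univ : Finset (Fin n)) k y ^ b
          = (∏ j ∈ range k, (Wf univ (j+1) x / Wf univ j x)) ^ a
            * (∏ j ∈ range k, (Wf univ (j+1) y / Wf univ j y)) ^ b := by
            rw [Wf_telescope hkn x hx, Wf_telescope hkn y hy]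
        _ = ∏ j ∈ range k, ((Wf univ (j+1) x / Wf univ j x) ^ a
            * (Wf univ (j+1) y / Wf univ j y) ^ b) := by
            rw [Finset.prod_mul_distrib,
              Real.finset_prod_rpow _ _ hposx a, Real.finset_prod_rpow _ _ hposy b]
        _ ≤ ∏ j ∈ range k, (Wf univ (j+1) (a • x + b • y) / Wf univ j (a • x + b • y)) := by
            apply Finset.prod_le_prod
            · intro j hj
              have h1 := hposx j hj; have h2 := hposy j hj
              positivity
            · exact hfactor
        _ = Wf (univ : Finset (Fin n)) k (a • x + b • y) :=
            (Wf_telescope hkn _ habpos).symm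
    -- take logarithms
    have hEx : 0 < Wf (univ : Finset (Fin n)) k x := hEpos x hx
    have hEy : 0 < Wf (univ : Finset (Fin n)) k y := hEpos y hy
    simp only [hesymm, smul_eq_mul]
    calc a * Real.log (Wf univ k x) + b * Real.log (Wf univ k y)
        = Real.log (Wf univ k x ^ a * Wf univ k y ^ b) := by
          rw [Real.log_mul (by positivity) (by positivity),
            Real.log_rpow hEx, Real.log_rpow hEy]
      _ ≤ Real.log (Wf univ k (a • x + b • y)) :=
          Real.log_le_log (by positivity) hprod
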